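/- arXiv:2406.01474 — 3 statements merged into one kernel-verified Lean document; each statement's English description precedes it below -/
import Mathlib

section
/- For every real number r with 0 ≤ r ≤ 1 and every real θ, the inequality ∑_{k=1}^∞ (-1)^{k+1} r^k cos(kθ)/(k+2) ≤ ∑_{k=1}^∞ (-1)^{k+1} r^k/(k+2) holds. -/
open Filter Topology Complex

lemma kernel_nonneg (θ u : ℝ) (hu0 : 0 ≤ u) (hu1 : u < 1) :
    0 ≤ ∑' n : ℕ, (-1 : ℝ) ^ n * u ^ n * (1 - Real.cos ((n + 1) * θ)) := by
  set ζ : ℂ := Complex.exp (θ * Complex.I) with hζ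
  have hz : ‖-((u : ℂ) * ζ)‖ < 1 := by
    rw [norm_neg, norm_mul]
    simp only [hζ, Complex.norm_exp_ofReal_mul_I, Complex.norm_real, Real.norm_eq_abs, mul_one]
    rwa [_root_.abs_of_nonneg hu0]
  have h2 : HasSum (fun n : ℕ => ζ * (-((u : ℂ) * ζ)) ^ n)
      (ζ * (1 - (-((u : ℂ) * ζ)))⁻¹) :=
    (hasSum_geometric_of_norm_lt_one hz).mul_left ζ
  have h3 : HasSum (fun n : ℕ => (-1 : ℝ) ^ n * u ^ n * Real.cos ((n + 1) * θ))
      ((ζ * (1 - (-((u : ℂ) * ζ)))⁻¹).re) := by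
    have := Complex.hasSum_re h2
    convert this using 2 with n
    have : ζ * (-((u : ℂ) * ζ)) ^ n = (((-1 : ℝ) ^ n * u ^ n : ℝ) : ℂ) *
        Complex.exp ((((n : ℝ) + 1) * θ : ℝ) * Complex.I) := by
      rw [neg_pow, mul_pow, hζ, ← Complex.exp_nat_mul]
      push_cast
      rw [show ((n : ℂ) + 1) * ↑θ * Complex.I = (n : ℂ) * (↑θ * Complex.I) + ↑θ * Complex.I by ring,
        Complex.exp_add]
      ring
    rw [this, Complex.re_ofReal_mul, Complex.exp_ofReal_mul_I_re]
  have h1 : HasSum (fun n : ℕ => (-1 : ℝ) ^ n * u ^ n) ((1 + u)⁻¹) := by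
    have hn : ‖-u‖ < 1 := by
      rw [norm_neg, Real.norm_eq_abs, _root_.abs_of_nonneg hu0]; exact hu1
    have h := hasSum_geometric_of_norm_lt_one hn
    rw [sub_neg_eq_add] at h
    convert h using 2 with n
    · rfl
    exact (neg_pow u n).symm
  have hsum : HasSum (fun n : ℕ => (-1 : ℝ) ^ n * u ^ n * (1 - Real.cos ((n + 1) * θ)))
      ((1 + u)⁻¹ - (ζ * (1 - (-((u : ℂ) * ζ)))⁻¹).re) := by
    have := h1.sub h3
    convert this using 2 with n
    · rfl
    ring
  rw [hsum.tsum_eq]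
  -- now the arithmetic
  have hre : (ζ * (1 - (-((u : ℂ) * ζ)))⁻¹).re
      = (Real.cos θ * (1 + u * Real.cos θ) + Real.sin θ * (u * Real.sin θ))
        / ((1 + u * Real.cos θ) ^ 2 + (u * Real.sin θ) ^ 2) := by
    rw [sub_neg_eq_add, ← div_eq_mul_inv, Complex.div_re]
    have h1re : (1 + (u : ℂ) * ζ).re = 1 + u * Real.cos θ := by
      simp [hζ, Complex.exp_ofReal_mul_I_re, Complex.exp_ofReal_mul_I_im]
    have h1im : (1 + (u : ℂ) * ζ).im = u * Real.sin θ := by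
      simp [hζ, Complex.exp_ofReal_mul_I_re, Complex.exp_ofReal_mul_I_im]
    have hn : Complex.normSq (1 + (u : ℂ) * ζ)
        = (1 + u * Real.cos θ) ^ 2 + (u * Real.sin θ) ^ 2 := by
      rw [Complex.normSq_apply, h1re, h1im]; ring
    rw [h1re, h1im, hn, hζ, Complex.exp_ofReal_mul_I_re, Complex.exp_ofReal_mul_I_im]
    ring
  rw [hre]
  have hcos := Real.neg_one_le_cos θ
  have hcos' := Real.cos_le_one θ
  have hpyth := Real.sin_sq_add_cos_sq θ
  have hN : 0 < (1 + u * Real.cos θ) ^ 2 + (u * Real.sin θ) ^ 2 := by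
    nlinarith [sq_nonneg (1 + u * Real.cos θ), sq_nonneg (u * Real.sin θ), sq_nonneg (1 - u),
      sq_nonneg (u + Real.cos θ), sq_nonneg (Real.sin θ)]
  rw [sub_nonneg, div_le_iff₀ hN, inv_mul_eq_div, le_div_iff₀ (by linarith : (0:ℝ) < 1 + u)]
  nlinarith [mul_nonneg (sub_nonneg.2 hu1.le) (sub_nonneg.2 hcos'), sq_nonneg (Real.sin θ)]

lemma P_nonneg (θ r x : ℝ) (hr0 : 0 ≤ r) (hr1 : r ≤ 1) (hx0 : 0 ≤ x) (hx1 : x < 1) :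
    0 ≤ ∑' n : ℕ, ((-1 : ℝ) ^ n * r ^ (n + 1) * (1 - Real.cos (((n : ℝ) + 1) * θ)) / ((n : ℝ) + 3)) * x ^ n := by
  set F : ℕ → ℝ → ℝ := fun n y =>
    (-1 : ℝ) ^ n * r ^ (n + 1) * (1 - Real.cos (((n : ℝ) + 1) * θ)) * x ^ n * y ^ (n + 2) with hF
  have hcb : ∀ n : ℕ, |1 - Real.cos (((n : ℝ) + 1) * θ)| ≤ 2 := by
    intro n
    rw [abs_le]
    constructor <;>
      nlinarith [Real.neg_one_le_cos (((n : ℝ) + 1) * θ), Real.cos_le_one (((n : ℝ) + 1) * θ)]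
  -- each integral computes the term
  have hint : ∀ n : ℕ, ∫ y in Set.Ioc (0 : ℝ) 1, F n y =
      ((-1 : ℝ) ^ n * r ^ (n + 1) * (1 - Real.cos (((n : ℝ) + 1) * θ)) / ((n : ℝ) + 3)) * x ^ n := by
    intro n
    have hpow : ∫ y in Set.Ioc (0 : ℝ) 1, y ^ (n + 2) = 1 / ((n : ℝ) + 3) := by
      rw [← intervalIntegral.integral_of_le (zero_le_one), integral_pow]
      push_cast
      norm_num
      ring
    rw [hF]
    simp only
    rw [MeasureTheory.integral_const_mul, hpow]
    ring
  -- measurability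
  have hmeas : ∀ n : ℕ, MeasureTheory.AEStronglyMeasurable (F n)
      (MeasureTheory.volume.restrict (Set.Ioc (0 : ℝ) 1)) := by
    intro n
    exact (Continuous.aestronglyMeasurable (by continuity))
  -- finiteness
  have hfin : ∑' n : ℕ, ∫⁻ y in Set.Ioc (0 : ℝ) 1, ‖F n y‖₊ ≠ ⊤ := by
    have hb : ∀ n : ℕ, (∫⁻ y in Set.Ioc (0 : ℝ) 1, ‖F n y‖₊) ≤ ENNReal.ofReal (2 * x ^ n) := by
      intro n
      have hmono : (∫⁻ y in Set.Ioc (0 : ℝ) 1, ‖F n y‖₊) ≤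
          ∫⁻ _ in Set.Ioc (0 : ℝ) 1, ENNReal.ofReal (2 * x ^ n) := by
        apply MeasureTheory.setLIntegral_mono' measurableSet_Ioc
        intro y hy
        rw [show ((‖F n y‖₊ : ENNReal)) = ENNReal.ofReal ‖F n y‖ from (ofReal_norm (F n y)).symm]
        apply ENNReal.ofReal_le_ofReal
        have hy0 : (0 : ℝ) ≤ y := hy.1.le
        have hy1 : y ≤ 1 := hy.2
        have h1 : ‖F n y‖ = r ^ (n + 1) * |1 - Real.cos (((n : ℝ) + 1) * θ)| * x ^ n * y ^ (n + 2) := by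
          rw [hF]
          simp only [Real.norm_eq_abs, abs_mul]
          rw [_root_.abs_pow, _root_.abs_pow, _root_.abs_pow, _root_.abs_pow, _root_.abs_neg, _root_.abs_one, one_pow, one_mul,
            _root_.abs_of_nonneg hr0, _root_.abs_of_nonneg hx0, _root_.abs_of_nonneg hy0]
        rw [h1]
        calc r ^ (n + 1) * |1 - Real.cos (((n : ℝ) + 1) * θ)| * x ^ n * y ^ (n + 2)
            ≤ 1 * 2 * x ^ n * 1 := by
              gcongr
              · exact pow_le_one₀ hr0 hr1
              · exact hcb n
              · exact pow_le_one₀ hy0 hy1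
          _ = 2 * x ^ n := by ring
      calc ∫⁻ y in Set.Ioc (0 : ℝ) 1, (‖F n y‖₊ : ENNReal)
          ≤ ∫⁻ _ in Set.Ioc (0 : ℝ) 1, ENNReal.ofReal (2 * x ^ n) := hmono
        _ = ENNReal.ofReal (2 * x ^ n) := by
            rw [MeasureTheory.setLIntegral_const]
            simp [Real.volume_Ioc]
    have hle : ∑' n : ℕ, ∫⁻ y in Set.Ioc (0 : ℝ) 1, (‖F n y‖₊ : ENNReal)
        ≤ ENNReal.ofReal (∑' n : ℕ, 2 * x ^ n) := by
      calc ∑' n : ℕ, ∫⁻ y in Set.Ioc (0 : ℝ) 1, (‖F n y‖₊ : ENNReal)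
          ≤ ∑' n : ℕ, ENNReal.ofReal (2 * x ^ n) := ENNReal.tsum_le_tsum hb
        _ = ENNReal.ofReal (∑' n : ℕ, 2 * x ^ n) := (ENNReal.ofReal_tsum_of_nonneg
              (fun n => by positivity) ((summable_geometric_of_lt_one hx0 hx1).mul_left 2)).symm
    exact ne_top_of_le_ne_top ENNReal.ofReal_ne_top hle
  -- swap
  have hswap := MeasureTheory.integral_tsum hmeas hfin
  have hpt : ∀ y ∈ Set.Ioc (0 : ℝ) 1, 0 ≤ ∑' n : ℕ, F n y := by
    intro y hy
    have hy0 : (0 : ℝ) ≤ y := hy.1.le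
    have hy1 : y ≤ 1 := hy.2
    have hu0 : 0 ≤ r * x * y := by positivity
    have hu1 : r * x * y < 1 := by
      nlinarith [mul_nonneg (mul_nonneg hx0 hy0) (sub_nonneg.2 hr1),
        mul_nonneg hx0 (sub_nonneg.2 hy1)]
    have hk := kernel_nonneg θ (r * x * y) hu0 hu1
    have hrw : ∀ n : ℕ, F n y =
        (r * y ^ 2) * ((-1 : ℝ) ^ n * (r * x * y) ^ n * (1 - Real.cos (((n : ℝ) + 1) * θ))) := by
      intro n
      rw [hF]
      simp only
      ring
    rw [tsum_congr hrw, tsum_mul_left]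
    exact mul_nonneg (by positivity) hk
  have h0 : 0 ≤ ∫ y in Set.Ioc (0 : ℝ) 1, ∑' n : ℕ, F n y :=
    MeasureTheory.setIntegral_nonneg measurableSet_Ioc hpt
  rw [hswap] at h0
  calc (0 : ℝ) ≤ ∑' n : ℕ, ∫ y in Set.Ioc (0 : ℝ) 1, F n y := h0
    _ = _ := tsum_congr hint

/-- For `0 ≤ r ≤ 1` and any real `θ`,
`∑_{k=1}^∞ (-1)^{k+1} r^k cos(kθ)/(k+2) ≤ ∑_{k=1}^∞ (-1)^{k+1} r^k/(k+2)`,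
where both series are understood as limits of partial sums. -/
theorem cos_series_le (r θ : ℝ) (hr0 : 0 ≤ r) (hr1 : r ≤ 1) (A B : ℝ)
    (hA : Tendsto (fun N => ∑ k ∈ Finset.range N,
      (-1 : ℝ) ^ k * r ^ (k + 1) * Real.cos ((k + 1) * θ) / (k + 3)) atTop (𝓝 A))
    (hB : Tendsto (fun N => ∑ k ∈ Finset.range N,
      (-1 : ℝ) ^ k * r ^ (k + 1) / (k + 3)) atTop (𝓝 B)) :
    A ≤ B := by
  have hD : Tendsto (fun N => ∑ k ∈ Finset.range N,
      ((-1 : ℝ) ^ k * r ^ (k + 1) / (k + 3)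
        - (-1 : ℝ) ^ k * r ^ (k + 1) * Real.cos ((k + 1) * θ) / (k + 3))) atTop (𝓝 (B - A)) := by
    have := hB.sub hA
    simpa [Finset.sum_sub_distrib] using this
  have habel := Real.tendsto_tsum_powerSeries_nhdsWithin_lt hD
  have hev : ∀ᶠ x in 𝓝[<] (1 : ℝ), 0 ≤ ∑' n : ℕ,
      ((-1 : ℝ) ^ n * r ^ (n + 1) / (n + 3)
        - (-1 : ℝ) ^ n * r ^ (n + 1) * Real.cos ((n + 1) * θ) / (n + 3)) * x ^ n := by
    filter_upwards [Ioo_mem_nhdsLT_of_mem (show (1 : ℝ) ∈ Set.Ioc 0 1 by constructor <;> norm_num)]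
      with x hx
    have hP := P_nonneg θ r x hr0 hr1 hx.1.le hx.2
    have he : ∀ n : ℕ, ((-1 : ℝ) ^ n * r ^ (n + 1) / (n + 3)
        - (-1 : ℝ) ^ n * r ^ (n + 1) * Real.cos ((n + 1) * θ) / (n + 3)) * x ^ n
        = ((-1 : ℝ) ^ n * r ^ (n + 1) * (1 - Real.cos (((n : ℝ) + 1) * θ)) / ((n : ℝ) + 3)) * x ^ n := by
      intro n
      push_cast
      ring
    rw [tsum_congr he]
    exact hP
  have h0 : (0 : ℝ) ≤ B - A := ge_of_tendsto habel hev
  linarith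
end

section
/- Backlund's Lemma: Let f be holomorphic on the closed disc |z - a| ≤ R with |f(z)| ≤ M there, let b satisfy 0 < |b - a| < R, and assume f does not vanish on the segment [a, b]. Then |Re((1/(2πi)) ∫_a^b f'(z)/f(z) dz)| ≤ (1/2) · log(M/|f(a)|) / log(R/|b - a|). -/
open Complex Metric Set


lemma backlund_reflect {w : ℂ → ℂ} {R : ℝ} (hw : DifferentiableOn ℂ w (closedBall (0:ℂ) R)) :
    DifferentiableOn ℂ (fun z => (starRingEnd ℂ) (w ((starRingEnd ℂ) z))) (closedBall (0:ℂ) R) := by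
  intro z hz
  have habs : ∀ x : ℂ, x ∈ closedBall (0:ℂ) R → (starRingEnd ℂ) x ∈ closedBall (0:ℂ) R := by
    intro x hx
    simpa [mem_closedBall, Complex.dist_eq, map_sub] using hx
  have hz' : (starRingEnd ℂ) z ∈ closedBall (0:ℂ) R := habs z hz
  have hD : HasFDerivWithinAt w (fderivWithin ℂ w (closedBall (0:ℂ) R) ((starRingEnd ℂ) z))
      (closedBall (0:ℂ) R) ((starRingEnd ℂ) z) := (hw _ hz').hasFDerivWithinAt
  set D := fderivWithin ℂ w (closedBall (0:ℂ) R) ((starRingEnd ℂ) z) with hDdef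
  set C := (Complex.conjCLE : ℂ ≃L[ℝ] ℂ).toContinuousLinearMap with hCdef
  have hCderiv : ∀ x : ℂ, HasFDerivAt (fun y : ℂ => (starRingEnd ℂ) y) C x := by
    intro x
    have := (Complex.conjCLE : ℂ ≃L[ℝ] ℂ).hasFDerivAt (x := x)
    exact this
  have hinner : HasFDerivWithinAt (fun y : ℂ => (starRingEnd ℂ) y) C (closedBall (0:ℂ) R) z :=
    (hCderiv z).hasFDerivWithinAt
  have hmid : HasFDerivWithinAt (fun y : ℂ => w ((starRingEnd ℂ) y))
      ((D.restrictScalars ℝ).comp C) (closedBall (0:ℂ) R) z :=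
    HasFDerivWithinAt.comp z (hD.restrictScalars ℝ) hinner habs
  have hfull : HasFDerivWithinAt (fun y : ℂ => (starRingEnd ℂ) (w ((starRingEnd ℂ) y)))
      (C.comp ((D.restrictScalars ℝ).comp C)) (closedBall (0:ℂ) R) z :=
    (hCderiv _).comp_hasFDerivWithinAt z hmid
  refine ⟨(starRingEnd ℂ) (D 1) • ContinuousLinearMap.id ℂ ℂ, ?_⟩
  apply HasFDerivWithinAt.of_restrictScalars ℝ hfull
  ext v
  have hv : ∀ u : ℂ, D u = u * D 1 := by
    intro u
    have := D.map_smul u (1:ℂ)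
    simpa [smul_eq_mul] using this
  simp only [ContinuousLinearMap.coe_restrictScalars', ContinuousLinearMap.smul_apply,
    ContinuousLinearMap.coe_comp', Function.comp_apply, ContinuousLinearMap.coe_id', id_eq,
    hCdef, ContinuousLinearEquiv.coe_coe, Complex.conjCLE_apply]
  rw [hv ((starRingEnd ℂ) v)]
  simp [smul_eq_mul, mul_comm]


lemma backlund_blaschke {R r K : ℝ} (hr : 0 < r) (hrR : r < R) :
    ∀ (k : ℕ) (h : ℂ → ℂ), DifferentiableOn ℂ h (closedBall (0:ℂ) R) →
    (∀ z ∈ closedBall (0:ℂ) R, ‖h z‖ ≤ K) →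
    ∀ (x : Fin k → ℝ), Function.Injective x →
    (∀ j, x j ∈ Set.Ioc (0:ℝ) r) → (∀ j, h ((x j : ℝ) : ℂ) = 0) →
    ‖h 0‖ * (R / r) ^ k ≤ K := by
  have hR : 0 < R := hr.trans hrR
  intro k
  induction k with
  | zero =>
    intro h hd hb x hinj hmem hzero
    simpa using hb 0 (by simp [mem_closedBall, hR.le])
  | succ k ih =>
    intro h hd hb x hinj hmem hzero
    set c : ℝ := x (Fin.last k) with hcdef
    have hc : c ∈ Set.Ioc (0:ℝ) r := hmem _
    have hcabs : ‖((c:ℝ):ℂ)‖ = c := by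
      simp [Complex.norm_real, abs_of_pos hc.1]
    have hcR : ‖((c:ℝ):ℂ)‖ < R := by rw [hcabs]; exact hc.2.trans_lt hrR
    have hcball : ((c:ℝ):ℂ) ∈ ball (0:ℂ) R := by simpa [mem_ball, Complex.dist_eq] using hcR
    have hnhds : closedBall (0:ℂ) R ∈ nhds ((c:ℝ):ℂ) :=
      Filter.mem_of_superset (isOpen_ball.mem_nhds hcball) ball_subset_closedBall
    set h₁ : ℂ → ℂ := fun z => dslope h ((c:ℝ):ℂ) z * ((R:ℂ)^2 - (c:ℂ)*z) / R with h1def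
    have hd1 : DifferentiableOn ℂ h₁ (closedBall (0:ℂ) R) := by
      apply DifferentiableOn.div_const
      exact ((differentiableOn_dslope hnhds).mpr hd).mul
        ((differentiableOn_const _).sub ((differentiableOn_const _).mul differentiableOn_id))
    have hkey : ∀ z : ℂ, ‖z‖ = R →
        ‖(R:ℂ)^2 - (c:ℂ)*z‖ = R * ‖z - (c:ℂ)‖ := by
      intro z hzR
      have hzz : z * (starRingEnd ℂ) z = ((R^2 : ℝ) : ℂ) := by
        rw [Complex.mul_conj]
        norm_cast
        rw [← Complex.sq_norm, hzR]
      have : (R:ℂ)^2 - (c:ℂ)*z = z * ((starRingEnd ℂ) z - (c:ℂ)) := by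
        rw [mul_sub, hzz]; push_cast; ring
      rw [this, norm_mul, hzR]
      congr 1
      rw [← Complex.norm_conj, map_sub]
      simp
    have hbd1 : ∀ z ∈ sphere (0:ℂ) R, ‖h₁ z‖ ≤ K := by
      intro z hz
      have hzR : ‖z‖ = R := by simpa [Complex.dist_eq] using hz
      have hzc : z ≠ ((c:ℝ):ℂ) := by
        intro hzc; rw [hzc, hcabs] at hzR; exact absurd hzR (ne_of_lt (hc.2.trans_lt hrR))
      have hds : dslope h ((c:ℝ):ℂ) z = h z / (z - ((c:ℝ):ℂ)) := by
        rw [dslope_of_ne _ hzc, slope_def_field, (show h ((c:ℝ):ℂ) = 0 from hzero (Fin.last k)), sub_zero]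
      have hA : ‖z - ((c:ℝ):ℂ)‖ ≠ 0 := by
        simpa [sub_eq_zero] using hzc
      have habseq : ‖h₁ z‖ = ‖h z‖ := by
        rw [h1def]
        simp only [norm_div, norm_mul, hds, hkey z hzR, Complex.norm_real, Real.norm_eq_abs, abs_of_pos hR]
        field_simp
        try exact Or.inl (mul_comm _ _)
      rw [habseq]
      exact hb z (sphere_subset_closedBall hz)
    have hmax : ‖h₁ 0‖ ≤ K := by
      have hdc : DiffContOnCl ℂ h₁ (ball (0:ℂ) R) := by
        constructor
        · exact hd1.mono ball_subset_closedBall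
        · rw [closure_ball _ (ne_of_gt hR)]; exact hd1.continuousOn
      have hfr : ∀ z ∈ frontier (ball (0:ℂ) R), ‖h₁ z‖ ≤ K := by
        intro z hz
        rw [frontier_ball _ (ne_of_gt hR)] at hz
        exact hbd1 z hz
      have h0cl : (0:ℂ) ∈ closure (ball (0:ℂ) R) := by
        rw [closure_ball _ (ne_of_gt hR)]; simp [mem_closedBall, hR.le]
      simpa using Complex.norm_le_of_forall_mem_frontier_norm_le isBounded_ball hdc hfr h0cl
    have h10 : ‖h₁ 0‖ = ‖h 0‖ * R / c := by
      have h0c : (0:ℂ) ≠ ((c:ℝ):ℂ) := by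
        intro h0c
        have := congrArg (‖·‖) h0c
        simp [hcabs] at this
        exact hc.1.ne' (abs_eq_zero.mp this.symm)
      have heq : h₁ 0 = h 0 / (0 - ((c:ℝ):ℂ)) * ((R:ℂ)^2) / R := by
        rw [h1def]
        simp only [dslope_of_ne _ h0c, slope_def_field, (show h ((c:ℝ):ℂ) = 0 from hzero (Fin.last k)), sub_zero, mul_zero]
        try ring
      rw [heq]
      have hcne : (c:ℝ) ≠ 0 := hc.1.ne'
      simp only [zero_sub, norm_div, norm_mul, norm_pow, norm_neg, hcabs,
        Complex.norm_real, Real.norm_eq_abs, abs_of_pos hR, abs_of_pos hc.1]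
      field_simp
      try ring
    -- apply induction hypothesis to h₁
    have hb1 : ∀ z ∈ closedBall (0:ℂ) R, ‖h₁ z‖ ≤ K := by
      intro z hz
      have hdc : DiffContOnCl ℂ h₁ (ball (0:ℂ) R) := by
        constructor
        · exact hd1.mono ball_subset_closedBall
        · rw [closure_ball _ (ne_of_gt hR)]; exact hd1.continuousOn
      have hfr : ∀ w ∈ frontier (ball (0:ℂ) R), ‖h₁ w‖ ≤ K := by
        intro w hw
        rw [frontier_ball _ (ne_of_gt hR)] at hw
        exact hbd1 w hw
      have hzcl : z ∈ closure (ball (0:ℂ) R) := by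
        rwa [closure_ball _ (ne_of_gt hR)]
      simpa using Complex.norm_le_of_forall_mem_frontier_norm_le isBounded_ball hdc hfr hzcl
    have hzero1 : ∀ j : Fin k, h₁ ((x (Fin.castSucc j) : ℝ) : ℂ) = 0 := by
      intro j
      have hne : ((x (Fin.castSucc j) : ℝ) : ℂ) ≠ ((c:ℝ):ℂ) := by
        intro he
        have : x (Fin.castSucc j) = c := by exact_mod_cast he
        exact absurd (hinj this) (Fin.ne_of_lt (Fin.castSucc_lt_last j))
      rw [h1def]
      simp only [dslope_of_ne _ hne, slope_def_field, (show h ((c:ℝ):ℂ) = 0 from hzero (Fin.last k)), sub_zero,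
        hzero (Fin.castSucc j), zero_div, zero_mul, zero_div]
    have hih := ih h₁ hd1 hb1 (fun j => x (Fin.castSucc j))
      (fun i j hij => Fin.castSucc_injective k (hinj hij))
      (fun j => hmem _) hzero1
    rw [h10] at hih
    calc ‖h 0‖ * (R / r) ^ (k+1)
        = ‖h 0‖ * (R / r) * (R / r) ^ k := by ring
      _ ≤ ‖h 0‖ * (R / c) * (R / r) ^ k := by
          gcongr <;> first | exact hc.1 | exact hc.2
      _ = ‖h 0‖ * R / c * (R / r) ^ k := by ring
      _ ≤ K := hih

set_option maxHeartbeats 1000000 in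
/-- **Backlund's Lemma.** -/
theorem backlund_lemma (f : ℂ → ℂ) (a b : ℂ) (R M : ℝ)
    (hf : DifferentiableOn ℂ f (Metric.closedBall a R))
    (hM : ∀ z ∈ Metric.closedBall a R, ‖f z‖ ≤ M)
    (hb0 : 0 < ‖b - a‖) (hbR : ‖b - a‖ < R)
    (hfa : ‖f a‖ ≤ M)
    (hnz : ∀ z ∈ segment ℝ a b, f z ≠ 0) :
    |((1 / (2 * Real.pi * I)) * ∫ t in (0:ℝ)..1,
        (b - a) * deriv f (a + t • (b - a)) / f (a + t • (b - a))).re| ≤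
      (1 / 2) * Real.log (M / ‖f a‖) /
        Real.log (R / ‖b - a‖) := by
  set u : ℂ := b - a with hu
  set r : ℝ := ‖b - a‖ with hr
  have hR0 : 0 < R := hb0.trans hbR
  have hfa0 : f a ≠ 0 := hnz a (left_mem_segment ℝ a b)
  have hfapos : 0 < ‖f a‖ := by
    simpa [norm_pos_iff] using hfa0
  have hM0 : 0 < M := hfapos.trans_le hfa
  -- segment parametrization
  have hseg : ∀ t : ℝ, t ∈ Icc (0:ℝ) 1 → a + t • u ∈ segment ℝ a b := by
    intro t ht
    rw [segment_eq_image' ℝ a b]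
    exact ⟨t, ht, rfl⟩
  have hball : ∀ t : ℝ, t ∈ Icc (0:ℝ) 1 → a + t • u ∈ ball a R := by
    intro t ht
    have : dist (a + t • u) a = |t| * r := by
      rw [Complex.dist_eq]
      simp [Complex.real_smul, norm_mul, Complex.norm_real, hr, hu]
    rw [mem_ball, this, _root_.abs_of_nonneg ht.1]
    calc t * r ≤ 1 * r := by gcongr; exact ht.2
      _ < R := by simpa using hbR
  -- the open set where things are nice
  have hcf : ContinuousOn f (ball a R) :=
    (hf.mono ball_subset_closedBall).continuousOn
  have hO : IsOpen {z : ℂ | z ∈ ball a R ∧ f z ≠ 0} := by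
    have := hcf.isOpen_inter_preimage isOpen_ball (isOpen_compl_singleton : IsOpen ({(0:ℂ)}ᶜ))
    exact this
  have hγc : Continuous (fun t : ℝ => a + t • u) := by continuity
  set T : Set ℝ := (fun t : ℝ => a + t • u) ⁻¹' {z : ℂ | z ∈ ball a R ∧ f z ≠ 0} with hT
  have hTopen : IsOpen T := hO.preimage hγc
  have hIT : Icc (0:ℝ) 1 ⊆ T := by
    intro t ht
    exact ⟨hball t ht, hnz _ (hseg t ht)⟩
  -- derivative of f is continuous on the ball
  have hfan : AnalyticOnNhd ℂ f (ball a R) :=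
    (hf.mono ball_subset_closedBall).analyticOnNhd isOpen_ball
  have hdc : ContinuousOn (deriv f) (ball a R) := hfan.deriv.continuousOn
  -- the logarithmic derivative integrand
  set q : ℝ → ℂ := fun t => u * deriv f (a + t • u) / f (a + t • u) with hq
  have hqc : ContinuousOn q T := by
    apply ContinuousOn.div
    · exact (continuousOn_const.mul (hdc.comp hγc.continuousOn (fun t ht => ht.1)))
    · exact hcf.comp hγc.continuousOn (fun t ht => ht.1)
    · exact fun t ht => ht.2
  set X : ℝ → ℂ := fun t => ∫ s in (0:ℝ)..t, q s with hX
  have hXint : ∀ t ∈ Icc (0:ℝ) 1, IntervalIntegrable q MeasureTheory.volume 0 t := by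
    intro t ht
    apply ContinuousOn.intervalIntegrable
    apply hqc.mono
    intro s hs
    apply hIT
    rw [Set.uIcc_of_le ht.1] at hs
    exact ⟨hs.1, hs.2.trans ht.2⟩
  have hXd : ∀ t ∈ Icc (0:ℝ) 1, HasDerivAt X (q t) t := by
    intro t ht
    exact intervalIntegral.integral_hasDerivAt_right (hXint t ht)
      (ContinuousOn.stronglyMeasurableAtFilter hTopen hqc t (hIT ht))
      ((hqc.continuousAt (hTopen.mem_nhds (hIT ht))))
  have hX0 : X 0 = 0 := intervalIntegral.integral_same
  -- the key exponential identity
  have hkey : ∀ t ∈ Icc (0:ℝ) 1, f (a + t • u) = f a * Complex.exp (X t) := by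
    have hconst : ∀ t ∈ Icc (0:ℝ) 1,
        f (a + t • u) * Complex.exp (-X t) = f (a + (0:ℝ) • u) * Complex.exp (-X 0) := by
      apply constant_of_has_deriv_right_zero
      · apply ContinuousOn.mul
        · exact hcf.comp hγc.continuousOn (fun t ht => (hIT ht).1)
        · have hXcont : ContinuousOn X (Icc (0:ℝ) 1) :=
            fun s hs => ((hXd s hs).continuousAt).continuousWithinAt
          exact Complex.continuous_exp.comp_continuousOn hXcont.neg
      · intro t ht
        have ht' : t ∈ Icc (0:ℝ) 1 := ⟨ht.1, ht.2.le⟩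
        have hmem := hIT ht'
        have hγd : HasDerivAt (fun s : ℝ => a + s • u) u t := by
          simpa using ((hasDerivAt_id t).smul_const u).const_add a
        have hfd : HasDerivAt f (deriv f (a + t • u)) (a + t • u) := by
          have : DifferentiableAt ℂ f (a + t • u) :=
            hf.differentiableAt (Filter.mem_of_superset
              (isOpen_ball.mem_nhds hmem.1) ball_subset_closedBall)
          exact this.hasDerivAt
        have h1 : HasDerivAt (fun s : ℝ => f (a + s • u))
            (u * deriv f (a + t • u)) t := by
          have := HasDerivAt.scomp t hfd hγd
          simpa [smul_eq_mul, mul_comm, Function.comp_def] using this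
        have h2 : HasDerivAt (fun s : ℝ => Complex.exp (-X s))
            (Complex.exp (-X t) * (-q t)) t := ((hXd t ht').neg).cexp
        have h3 := h1.mul h2
        have hfz : f (a + t • u) ≠ 0 := hmem.2
        have hqt : q t * f (a + t • u) = u * deriv f (a + t • u) :=
          div_mul_cancel₀ _ hfz
        have : u * deriv f (a + t • u) * Complex.exp (-X t)
            + f (a + t • u) * (Complex.exp (-X t) * (-q t)) = 0 := by
          have expand : u * deriv f (a + t • u) * Complex.exp (-X t)
              + f (a + t • u) * (Complex.exp (-X t) * (-q t))
              = u * deriv f (a + t • u) * Complex.exp (-X t)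
                - (q t * f (a + t • u)) * Complex.exp (-X t) := by ring
          rw [expand, hqt]
          ring
        rw [this] at h3
        exact h3.hasDerivWithinAt
    intro t ht
    have := hconst t ht
    rw [hX0] at this
    simp only [neg_zero, Complex.exp_zero, mul_one, zero_smul, add_zero] at this
    rw [← this, mul_assoc, ← Complex.exp_add]
    simp

  -- main quantities
  set Θ : ℝ := (X 1).im with hΘdef
  set D : ℝ := Real.log (R / r) with hDdef
  set L : ℝ := Real.log (M / ‖f a‖) with hLdef
  have hD : 0 < D := Real.log_pos ((one_lt_div hb0).mpr hbR)
  have hL : 0 ≤ L := Real.log_nonneg ((one_le_div hfapos).mpr hfa)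
  have hc_ne : ((r:ℝ):ℂ) ≠ 0 := by exact_mod_cast hb0.ne'
  have hclaim : ∀ n k : ℕ, ((k:ℝ) - 1/2) * Real.pi < (n:ℝ) * |Θ| →
      (k:ℝ) * D ≤ (n:ℝ) * L := by
    intro n k hkk
    have hθcont : ContinuousOn (fun s => (X s).im) (Icc (0:ℝ) 1) :=
      Complex.continuous_im.comp_continuousOn
        (fun s hs => ((hXd s hs).continuousAt).continuousWithinAt)
    set m : ℝ := if 0 ≤ Θ then 1 else -1 with hm
    have hmm : m * m = 1 := by rw [hm]; split_ifs <;> norm_num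
    have hmΘ : m * Θ = |Θ| := by
      rw [hm]; split_ifs with h
      · rw [one_mul, _root_.abs_of_nonneg h]
      · rw [neg_one_mul, _root_.abs_of_neg (lt_of_not_ge h)]
    set φ : ℝ → ℝ := fun s => m * ((n:ℝ) * (X s).im) with hφ
    have hφc : ContinuousOn φ (Icc (0:ℝ) 1) :=
      continuousOn_const.mul (continuousOn_const.mul hθcont)
    have hφ0 : φ 0 = 0 := by rw [hφ]; simp [hX0]
    have hφ1 : φ 1 = (n:ℝ) * |Θ| := by
      rw [hφ]; dsimp only; rw [← hmΘ, hΘdef]; ring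
    have hlev : ∀ j : Fin k, Real.pi/2 + (j:ℝ) * Real.pi ∈ Icc (φ 0) (φ 1) := by
      intro j
      constructor
      · rw [hφ0]; positivity
      · rw [hφ1]
        have hj : (j:ℝ) ≤ (k:ℝ) - 1 := by
          have h1 : (j:ℕ) + 1 ≤ k := j.2
          have : ((j:ℕ):ℝ) + 1 ≤ (k:ℝ) := by exact_mod_cast h1
          linarith
        nlinarith [Real.pi_pos]
    have himg : ∀ j : Fin k, ∃ s, s ∈ Icc (0:ℝ) 1 ∧
        φ s = Real.pi/2 + (j:ℝ) * Real.pi :=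
      fun j => intermediate_value_Icc (by norm_num : (0:ℝ) ≤ 1) hφc (hlev j)
    choose t ht hφt using himg
    have htpos : ∀ j, 0 < t j := by
      intro j
      rcases lt_or_eq_of_le (ht j).1 with h | h
      · exact h
      · exfalso
        have h1 := hφt j
        rw [← h, hφ0] at h1
        have h2 : 0 < Real.pi/2 + (j:ℝ)*Real.pi := by positivity
        linarith
    set x : Fin k → ℝ := fun j => t j * r with hx
    have hxmem : ∀ j, x j ∈ Set.Ioc (0:ℝ) r := by
      intro j
      refine ⟨mul_pos (htpos j) hb0, ?_⟩
      calc t j * r ≤ 1 * r := by gcongr; exact (ht j).2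
        _ = r := one_mul r
    have hxinj : Function.Injective x := by
      intro i j hij
      have hti : t i = t j := mul_right_cancel₀ (ne_of_gt hb0) hij
      have h1 : Real.pi/2 + (i:ℝ)*Real.pi = Real.pi/2 + (j:ℝ)*Real.pi := by
        rw [← hφt i, ← hφt j, hti]
      have h2 : (i:ℝ) = (j:ℝ) := by
        field_simp at h1
        linarith
      exact Fin.ext (by exact_mod_cast h2)
    -- the auxiliary holomorphic function
    set cc : ℂ := u / ((r:ℝ):ℂ) with hcc
    have huabs : ‖u‖ = r := by rw [hu, hr]
    have hccabs : ‖cc‖ = 1 := by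
      rw [hcc, norm_div, huabs, Complex.norm_real, Real.norm_eq_abs, abs_of_pos hb0, div_self hb0.ne']
    set w : ℂ → ℂ := fun z => f (a + cc * z) with hw
    have hmapsto : ∀ z : ℂ, z ∈ closedBall (0:ℂ) R → a + cc * z ∈ closedBall a R := by
      intro z hz
      rw [mem_closedBall, Complex.dist_eq, add_sub_cancel_left, norm_mul, hccabs, one_mul]
      simpa [mem_closedBall, Complex.dist_eq] using hz
    have hwd : DifferentiableOn ℂ w (closedBall (0:ℂ) R) := by
      apply DifferentiableOn.comp hf
      · exact (differentiableOn_const a).add ((differentiable_id.const_mul cc).differentiableOn)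
      · exact fun z hz => hmapsto z hz
    set W : ℂ → ℂ := fun z => (starRingEnd ℂ) (w ((starRingEnd ℂ) z)) with hW
    have hWd : DifferentiableOn ℂ W (closedBall (0:ℂ) R) := backlund_reflect hwd
    set H : ℂ → ℂ := fun z => ((starRingEnd ℂ) (f a) * w z)^n + ((f a) * W z)^n with hH
    have hHd : DifferentiableOn ℂ H (closedBall (0:ℂ) R) :=
      ((hwd.const_mul _).pow n).add ((hWd.const_mul _).pow n)
    set K : ℝ := 2 * (‖f a‖ * M)^n with hK
    have hHb : ∀ z ∈ closedBall (0:ℂ) R, ‖H z‖ ≤ K := by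
      intro z hz
      have hz' : (starRingEnd ℂ) z ∈ closedBall (0:ℂ) R := by
        simp only [mem_closedBall, Complex.dist_eq] at hz ⊢
        rw [show (starRingEnd ℂ) z - 0 = (starRingEnd ℂ) (z - 0) by rw [map_sub]; simp]
        rwa [Complex.norm_conj]
      have hwz : ‖w z‖ ≤ M := hM _ (hmapsto z hz)
      have hWz : ‖W z‖ ≤ M := by
        rw [hW]; dsimp only
        rw [Complex.norm_conj]
        exact hM _ (hmapsto _ hz')
      have h1 : ‖((starRingEnd ℂ) (f a) * w z)^n‖
          ≤ (‖f a‖ * M)^n := by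
        rw [norm_pow, norm_mul, Complex.norm_conj]
        exact pow_le_pow_left₀ (by positivity) (by gcongr) n
      have h2 : ‖((f a) * W z)^n‖ ≤ (‖f a‖ * M)^n := by
        rw [norm_pow, norm_mul]
        exact pow_le_pow_left₀ (by positivity) (by gcongr) n
      calc ‖H z‖
          ≤ ‖((starRingEnd ℂ) (f a) * w z)^n‖
            + ‖((f a) * W z)^n‖ := by
            rw [hH]; exact norm_add_le _ _
        _ ≤ (‖f a‖ * M)^n + (‖f a‖ * M)^n := add_le_add h1 h2
        _ = K := by rw [hK]; ring
    have hfa2 : (starRingEnd ℂ) (f a) * f a = ((‖f a‖^2 : ℝ) : ℂ) := by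
      rw [mul_comm, Complex.mul_conj, Complex.sq_norm]
    have hH0 : ‖H 0‖ = 2 * ‖f a‖ ^ (2*n) := by
      have hw0 : w 0 = f a := by rw [hw]; simp
      have hW0 : W 0 = (starRingEnd ℂ) (f a) := by
        rw [hW]; dsimp only; rw [map_zero, hw0]
      rw [hH]; dsimp only
      rw [hw0, hW0]
      have e1 : ((starRingEnd ℂ) (f a) * f a)^n + ((f a) * (starRingEnd ℂ) (f a))^n
          = 2 * ((‖f a‖^2 : ℝ) : ℂ)^n := by
        rw [mul_comm (f a) ((starRingEnd ℂ) (f a)), hfa2]; ring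
      rw [e1, norm_mul, Complex.norm_two, norm_pow, Complex.norm_real, Real.norm_eq_abs,
        _root_.abs_of_nonneg (sq_nonneg _), ← pow_mul]
    have hHz : ∀ j : Fin k, H ((x j : ℝ) : ℂ) = 0 := by
      intro j
      have hpt : a + cc * ((x j : ℝ) : ℂ) = a + (t j) • u := by
        rw [hcc, hx]
        push_cast
        rw [Complex.real_smul]
        congr 1
        field_simp
      have hconjpt : (starRingEnd ℂ) ((x j :ℝ):ℂ) = ((x j : ℝ):ℂ) := Complex.conj_ofReal _
      have hfx : w ((x j :ℝ):ℂ) = f a * Complex.exp (X (t j)) := by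
        rw [hw]; dsimp only; rw [hpt]; exact hkey (t j) (ht j)
      have hWx : W ((x j:ℝ):ℂ)
          = (starRingEnd ℂ) (f a) * (starRingEnd ℂ) (Complex.exp (X (t j))) := by
        rw [hW]; dsimp only; rw [hconjpt, hfx, map_mul]
      have hcos : Real.cos ((n:ℝ) * (X (t j)).im) = 0 := by
        have hlval : (n:ℝ) * (X (t j)).im = m * (Real.pi/2 + (j:ℝ)*Real.pi) := by
          have h1 := hφt j
          rw [hφ] at h1
          dsimp only at h1
          calc (n:ℝ) * (X (t j)).im = m * m * ((n:ℝ) * (X (t j)).im) := by rw [hmm]; ring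
            _ = m * (m * ((n:ℝ) * (X (t j)).im)) := by ring
            _ = m * (Real.pi/2 + (j:ℝ)*Real.pi) := by rw [h1]
        rw [hlval, hm]
        split_ifs
        · rw [one_mul, Real.cos_add, Real.cos_pi_div_two, Real.sin_pi_div_two,
            Real.sin_nat_mul_pi]
          ring
        · rw [neg_one_mul, Real.cos_neg, Real.cos_add, Real.cos_pi_div_two,
            Real.sin_pi_div_two, Real.sin_nat_mul_pi]
          ring
      have hre0 : ((Complex.exp (X (t j)))^n).re = 0 := by
        rw [← Complex.exp_nat_mul, Complex.exp_re]
        have him : ((n:ℂ) * X (t j)).im = (n:ℝ) * (X (t j)).im := by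
          simp [Complex.mul_im]
        rw [him, hcos, mul_zero]
      rw [hH]; dsimp only
      rw [hfx, hWx]
      have e2 : ((starRingEnd ℂ) (f a) * (f a * Complex.exp (X (t j))))^n
          + (f a * ((starRingEnd ℂ) (f a) * (starRingEnd ℂ) (Complex.exp (X (t j)))))^n
          = ((‖f a‖^2 : ℝ) : ℂ)^n *
            ((Complex.exp (X (t j)))^n + (starRingEnd ℂ) ((Complex.exp (X (t j)))^n)) := by
        rw [map_pow, ← hfa2]
        ring
      rw [e2, Complex.add_conj, hre0]
      simp
    have hbl := backlund_blaschke hb0 hbR k H hHd hHb x hxinj hxmem hHz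
    rw [hH0, hK] at hbl
    have hfan0 : 0 < ‖f a‖^n := pow_pos hfapos n
    have hratio : (R / r)^k ≤ (M / ‖f a‖)^n := by
      rw [mul_pow] at hbl
      rw [show (M / ‖f a‖)^n = M^n / ‖f a‖^n from div_pow _ _ _,
        le_div_iff₀ hfan0]
      have h2 : ‖f a‖^n * ((R / r)^k * ‖f a‖^n)
          ≤ ‖f a‖^n * M^n := by
        have hcalc : ‖f a‖^n * ((R / r)^k * ‖f a‖^n)
            = ‖f a‖ ^ (2*n) * (R/r)^k := by
          rw [two_mul, pow_add]; ring
        rw [hcalc]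
        nlinarith [hbl]
      exact le_of_mul_le_mul_left h2 hfan0
    have hlog := (Real.log_le_log_iff (by positivity) (by positivity)).mpr hratio
    rwa [Real.log_pow, Real.log_pow] at hlog
  -- conclude |Θ| * D ≤ π * L
  have hmain : |Θ| * D ≤ Real.pi * L := by
    by_contra hcon
    push_neg at hcon
    have hΔ : 0 < |Θ| - Real.pi * L / D := by
      rw [sub_pos, div_lt_iff₀ hD]
      linarith
    obtain ⟨n, hn⟩ := exists_nat_gt (Real.pi / (|Θ| - Real.pi * L / D))
    have hn' : Real.pi < (n:ℝ) * (|Θ| - Real.pi * L / D) := by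
      rw [div_lt_iff₀ hΔ] at hn
      linarith
    set k : ℕ := Nat.floor ((n:ℝ) * L / D) + 1 with hkdef
    have hkgt : (n:ℝ) * L / D < (k:ℝ) := by
      rw [hkdef]; push_cast; exact Nat.lt_floor_add_one _
    have hkle : (k:ℝ) ≤ (n:ℝ) * L / D + 1 := by
      rw [hkdef]; push_cast
      have := Nat.floor_le (show (0:ℝ) ≤ (n:ℝ) * L / D by positivity)
      linarith
    have hhyp : ((k:ℝ) - 1/2) * Real.pi < (n:ℝ) * |Θ| := by
      have hπ := Real.pi_pos
      have e1 : ((k:ℝ) - 1/2) * Real.pi ≤ ((n:ℝ) * L / D + 1/2) * Real.pi := by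
        gcongr
        linarith
      have e2 : ((n:ℝ) * L / D + 1/2) * Real.pi < (n:ℝ) * |Θ| := by
        have e3 : (n:ℝ) * (Real.pi * L / D) + Real.pi < (n:ℝ) * |Θ| := by
          have := hn'
          nlinarith
        have e4 : ((n:ℝ) * L / D) * Real.pi = (n:ℝ) * (Real.pi * L / D) := by ring
        nlinarith
      linarith
    have := hclaim n k hhyp
    have hklarge : (n:ℝ) * L < (k:ℝ) * D := by
      rw [div_lt_iff₀ hD] at hkgt
      linarith
    linarith
  -- final arithmetic
  have hre : ((1 / (2 * (Real.pi:ℂ) * Complex.I)) * X 1).re = Θ / (2*Real.pi) := by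
    have hne : (2 * (Real.pi:ℂ) * Complex.I) ≠ 0 := by
      simp [Real.pi_ne_zero, Complex.I_ne_zero]
    have e1 : (1 / (2 * (Real.pi:ℂ) * Complex.I)) * X 1
        = X 1 / (2 * (Real.pi:ℂ) * Complex.I) := by ring
    rw [e1, Complex.div_re]
    simp [Complex.normSq_apply, hΘdef]
    field_simp
  have hgoal : |Θ / (2*Real.pi)| ≤ 1/2 * L / D := by
    rw [abs_div, abs_of_pos Real.two_pi_pos, div_le_div_iff₀ Real.two_pi_pos hD]
    calc |Θ| * D ≤ Real.pi * L := hmain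
      _ = 1/2 * L * (2*Real.pi) := by ring
  calc |((1 / (2 * (Real.pi:ℂ) * Complex.I)) * X 1).re|
      = |Θ / (2*Real.pi)| := by rw [hre]
    _ ≤ 1/2 * L / D := hgoal
end

section
/- The function f(y) = (1 - e^{-πy² + πωy})/(1 - e^{2πωy}), with ω = e^{πi/4}, extends to an entire function of y: every zero of the denominator 1 - e^{2πωy} is also a zero of the numerator 1 - e^{-πy² + πωy}. -/
open Complex Real

/-- `ω = e^{πi/4}`. -/
noncomputable def omegaRoot : ℂ := Complex.exp (π * I / 4)

lemma omegaRoot_ne_zero : omegaRoot ≠ 0 := Complex.exp_ne_zero _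

lemma omegaRoot_sq : omegaRoot ^ 2 = I := by
  rw [omegaRoot, sq, ← Complex.exp_add]
  have : (π : ℂ) * I / 4 + π * I / 4 = (π / 2 : ℝ) * I := by push_cast; ring
  rw [this, Complex.exp_mul_I, ← Complex.ofReal_cos, ← Complex.ofReal_sin]
  simp [Real.cos_pi_div_two, Real.sin_pi_div_two]

lemma num_eq_one {y : ℂ} (h : Complex.exp (2 * π * omegaRoot * y) = 1) :
    Complex.exp (-π * y ^ 2 + π * omegaRoot * y) = 1 := by
  rw [Complex.exp_eq_one_iff] at h ⊢
  obtain ⟨n, hn⟩ := h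
  have hπ : (π : ℂ) ≠ 0 := by exact_mod_cast Real.pi_ne_zero
  have h2 : (2 * π : ℂ) ≠ 0 := by simp [hπ]
  have hωy : omegaRoot * y = n * I := by
    apply mul_left_cancel₀ h2
    linear_combination hn
  have hy : y = n * I / omegaRoot := by
    field_simp [omegaRoot_ne_zero]
    linear_combination hωy
  have hy2 : y ^ 2 = (n : ℂ) ^ 2 * I := by
    rw [hy, div_pow]
    rw [div_eq_iff (pow_ne_zero 2 omegaRoot_ne_zero), omegaRoot_sq]
    ring_nf
  obtain ⟨m, hm⟩ : Even ((n - 1) * ((n - 1) + 1)) := Int.even_mul_succ_self _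
  have hmC : ((n : ℂ) - 1) * ((n : ℂ) - 1 + 1) = m + m := by exact_mod_cast hm
  refine ⟨-m, ?_⟩
  push_cast
  linear_combination (-(π : ℂ)) * hy2 + (π : ℂ) * hωy + (-(π : ℂ) * I) * hmC

noncomputable def Dden : ℂ → ℂ := fun y => 1 - Complex.exp (2 * π * omegaRoot * y)
noncomputable def Nnum : ℂ → ℂ := fun y => 1 - Complex.exp (-π * y ^ 2 + π * omegaRoot * y)

lemma Dden_differentiable : Differentiable ℂ Dden :=
  (differentiable_const 1).sub ((differentiable_const _).mul differentiable_id).cexp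

lemma Nnum_differentiable : Differentiable ℂ Nnum := by
  apply (differentiable_const 1).sub
  apply Differentiable.cexp
  apply Differentiable.add
  · exact (differentiable_const _).mul (differentiable_id.pow 2)
  · exact (differentiable_const _).mul differentiable_id

lemma Dden_hasDerivAt (x : ℂ) :
    HasDerivAt Dden (-(Complex.exp (2 * π * omegaRoot * x) * (2 * π * omegaRoot))) x := by
  have h1 : HasDerivAt (fun y : ℂ => 2 * π * omegaRoot * y) (2 * π * omegaRoot) x := by
    simpa using (hasDerivAt_id x).const_mul (2 * π * omegaRoot)
  have h2 := (Complex.hasDerivAt_exp (2 * π * omegaRoot * x)).comp x h1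
  have h3 := (hasDerivAt_const x (1 : ℂ)).sub h2
  rw [zero_sub] at h3
  exact h3

/-- The function `f(y) = (1 - e^{-πy² + πωy})/(1 - e^{2πωy})` extends to an
entire function: every zero of the denominator is a zero of the numerator. -/
theorem gabcke_integrand_entire :
    (∃ g : ℂ → ℂ, Differentiable ℂ g ∧
      ∀ y : ℂ, 1 - Complex.exp (2 * π * omegaRoot * y) ≠ 0 →
        g y = (1 - Complex.exp (-π * y ^ 2 + π * omegaRoot * y)) /
          (1 - Complex.exp (2 * π * omegaRoot * y))) ∧
    ∀ y : ℂ, Complex.exp (2 * π * omegaRoot * y) = 1 →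
      Complex.exp (-π * y ^ 2 + π * omegaRoot * y) = 1 := by
  constructor
  · have hπ : (π : ℂ) ≠ 0 := by exact_mod_cast Real.pi_ne_zero
    have hcne : (2 * π * omegaRoot : ℂ) ≠ 0 := by
      simp [hπ, omegaRoot_ne_zero]
    refine ⟨fun y => if Dden y = 0 then deriv Nnum y / deriv Dden y else Nnum y / Dden y,
      ?_, ?_⟩
    · intro x
      by_cases hx : Dden x = 0
      · -- singular point
        have hexp : Complex.exp (2 * π * omegaRoot * x) = 1 := by
          have := hx; unfold Dden at this; linear_combination -this
        have hDx : deriv Dden x = -(2 * π * omegaRoot) := by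
          rw [(Dden_hasDerivAt x).deriv, hexp, one_mul]
        have hNx : Nnum x = 0 := by
          unfold Nnum; rw [num_eq_one hexp]; ring
        obtain ⟨pD, hpD⟩ := (Dden_differentiable.analyticAt x)
        obtain ⟨pN, hpN⟩ := (Nnum_differentiable.analyticAt x)
        have hdsD : AnalyticAt ℂ (dslope Dden x) x :=
          ⟨_, hpD.has_fpower_series_dslope_fslope⟩
        have hdsN : AnalyticAt ℂ (dslope Nnum x) x :=
          ⟨_, hpN.has_fpower_series_dslope_fslope⟩
        have hds0 : dslope Dden x x ≠ 0 := by
          rw [dslope_same, hDx]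
          simpa using hcne
        have hdiff : DifferentiableAt ℂ (fun y => dslope Nnum x y / dslope Dden x y) x :=
          hdsN.differentiableAt.div hdsD.differentiableAt hds0
        apply hdiff.congr_of_eventuallyEq
        have hiso : ∀ᶠ y in nhdsWithin x {x}ᶜ, Dden y ≠ 0 := by
          rcases (Dden_differentiable.analyticAt x).eventually_eq_zero_or_eventually_ne_zero
            with h0 | h1
          · exfalso
            have : deriv Dden x = 0 := by
              have := Filter.EventuallyEq.deriv_eq (f₁ := Dden) (f := fun _ => (0 : ℂ)) h0
              simpa using this
            rw [hDx] at this
            exact hcne (by linear_combination -this)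
          · exact h1
        rw [eventually_nhdsWithin_iff] at hiso
        filter_upwards [hiso] with y hy
        by_cases hyx : y = x
        · subst hyx
          simp [hx, dslope_same]
        · have hDy : Dden y ≠ 0 := hy hyx
          simp only [if_neg hDy]
          rw [dslope_of_ne _ hyx, dslope_of_ne _ hyx, slope_def_field, slope_def_field,
            hNx, hx, sub_zero, sub_zero]
          rw [div_div_div_cancel_right₀]
          exact sub_ne_zero.mpr hyx
      · have hd : DifferentiableAt ℂ (fun y => Nnum y / Dden y) x :=
          (Nnum_differentiable x).div (Dden_differentiable x) hx
        apply hd.congr_of_eventuallyEq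
        have hev : ∀ᶠ y in nhds x, Dden y ≠ 0 :=
          (Dden_differentiable.continuous.continuousAt).eventually_ne hx
        filter_upwards [hev] with y hy
        simp [if_neg hy]
    · intro y hy
      have h0 : Dden y ≠ 0 := hy
      simp only [if_neg h0, Nnum, Dden]
      exact if_neg hy
  · exact fun y h => num_eq_one h
end
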